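/- arXiv:2201.04797 — 2 statements merged into one kernel-verified Lean document; each statement's English description precedes it below -/
import Mathlib

section
/- Let N, n, m' be natural numbers, img : Fin N → Fin n and cls : Fin N → Fin m' maps such that distinct keypoints in the same image have distinct classes (img i = img j and cls i = cls j imply i = j). Define the N × N real matrices X̂* by X̂* i j = 1 if cls i = cls j and img i ≠ img j, and 0 otherwise, and D by D i j = 1 if img i = img j and i ≠ j, and 0 otherwise. Fix i, j with img i ≠ img j, and assume that if cls i ≠ cls j then there exist keypoints k and l lying in a common image (img k = img l) with cls k = cls i, cls l = cls j, k ≠ i and l ≠ j. Then X̂* i j = 1 if and only if (X̂* * D * X̂*) i j = 0. -/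
theorem Xstar_eq_one_iff_S2_eq_zero {N n m' : ℕ}
    (img : Fin N → Fin n) (cls : Fin N → Fin m')
    (hdist : ∀ i j : Fin N, img i = img j → cls i = cls j → i = j)
    (Xstar D : Matrix (Fin N) (Fin N) ℝ)
    (hX : ∀ i j : Fin N, Xstar i j = if cls i = cls j ∧ img i ≠ img j then 1 else 0)
    (hD : ∀ i j : Fin N, D i j = if img i = img j ∧ i ≠ j then 1 else 0)
    (i j : Fin N) (hij : img i ≠ img j)
    (hvis : cls i ≠ cls j →
      ∃ k l : Fin N, img k = img l ∧ cls k = cls i ∧ cls l = cls j ∧ k ≠ i ∧ l ≠ j) :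
    Xstar i j = 1 ↔ (Xstar * D * Xstar) i j = 0 := by
  have hentry : (Xstar * D * Xstar) i j
      = ∑ l, ∑ k, Xstar i k * D k l * Xstar l j := by
    simp [Matrix.mul_apply, Finset.sum_mul]
  have hnonneg : ∀ k l : Fin N, 0 ≤ Xstar i k * D k l * Xstar l j := by
    intro k l
    have h1 : (0:ℝ) ≤ Xstar i k := by rw [hX]; positivity
    have h2 : (0:ℝ) ≤ D k l := by rw [hD]; positivity
    have h3 : (0:ℝ) ≤ Xstar l j := by rw [hX]; positivity
    positivity
  constructor
  · intro hX1
    have hcls : cls i = cls j := by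
      by_contra hc
      rw [hX i j, if_neg (by tauto)] at hX1
      norm_num at hX1
    rw [hentry]
    apply Finset.sum_eq_zero
    intro l _
    apply Finset.sum_eq_zero
    intro k _
    by_cases h1 : cls i = cls k ∧ img i ≠ img k
    · by_cases h2 : img k = img l ∧ k ≠ l
      · -- then cls l = cls j would force k = l by hdist
        by_cases h3 : cls l = cls j ∧ img l ≠ img j
        · exact absurd (hdist k l h2.1 (by rw [← h1.1, hcls, ← h3.1])) h2.2
        · rw [hX l j, if_neg h3, mul_zero]
      · rw [hD, if_neg h2, mul_zero, zero_mul]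
    · rw [hX i k, if_neg h1, zero_mul, zero_mul]
  · intro hS
    by_contra hX1
    have hcls : cls i ≠ cls j := by
      intro hc
      exact hX1 (by rw [hX i j, if_pos ⟨hc, hij⟩])
    obtain ⟨k, l, hkl, hck, hcl, hki, hlj⟩ := hvis hcls
    have himgk : img i ≠ img k := fun h => hki (hdist k i h.symm hck)
    have himgl : img l ≠ img j := fun h => hlj (hdist l j h hcl)
    have hkne : k ≠ l := fun h => hcls (by rw [← hck, h, hcl])
    have hterm : Xstar i k * D k l * Xstar l j = 1 := by
      rw [hX, hD, hX, if_pos ⟨hck.symm, himgk⟩, if_pos ⟨hkl, hkne⟩,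
        if_pos ⟨hcl, himgl⟩]
      ring
    rw [hentry] at hS
    have := (Finset.sum_eq_zero_iff_of_nonneg (fun l _ =>
      Finset.sum_nonneg (fun k _ => hnonneg k l))).mp hS l (Finset.mem_univ l)
    have := (Finset.sum_eq_zero_iff_of_nonneg (fun k _ => hnonneg k l)).mp this
      k (Finset.mem_univ k)
    rw [hterm] at this
    norm_num at this
end

section
/- Let N and n be natural numbers, img : Fin N → Fin n a map, X an N × N real matrix, and D the N × N real matrix with D i j = 1 if img i = img j and i ≠ j, and 0 otherwise. Then for all natural numbers r, s and all indices i, j: (X^(r+s)) i j + (Xʳ * D * Xˢ) i j = Σ over t : Fin n of ( Σ over k with img k = t of (Xʳ) i k ) · ( Σ over k with img k = t of (Xˢ) k j ). -/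
theorem S1_add_S2_eq {N n : ℕ} (img : Fin N → Fin n)
    (X D : Matrix (Fin N) (Fin N) ℝ)
    (hD : ∀ i j : Fin N, D i j = if img i = img j ∧ i ≠ j then 1 else 0)
    (r s : ℕ) (i j : Fin N) :
    (X ^ (r + s)) i j + (X ^ r * D * X ^ s) i j =
      ∑ t : Fin n,
        (∑ k ∈ Finset.univ.filter (fun k : Fin N => img k = t), (X ^ r) i k) *
        (∑ k ∈ Finset.univ.filter (fun k : Fin N => img k = t), (X ^ s) k j) := by
  have hrhs : ∀ t : Fin n,
      (∑ k ∈ Finset.univ.filter (fun k : Fin N => img k = t), (X ^ r) i k) *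
      (∑ k ∈ Finset.univ.filter (fun k : Fin N => img k = t), (X ^ s) k j)
      = ∑ k : Fin N, ∑ l : Fin N,
          if img k = t ∧ img l = t then (X ^ r) i k * (X ^ s) l j else 0 := by
    intro t
    rw [Finset.sum_mul_sum]
    rw [Finset.sum_filter]
    refine Finset.sum_congr rfl fun k _ => ?_
    rw [Finset.sum_filter]
    by_cases hk : img k = t <;> simp [hk, Finset.mul_sum]
  rw [Finset.sum_congr rfl fun t _ => hrhs t]
  rw [Finset.sum_comm]
  have key : ∀ k : Fin N, ∑ t : Fin n, ∑ l : Fin N,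
      (if img k = t ∧ img l = t then (X ^ r) i k * (X ^ s) l j else 0)
      = ∑ l : Fin N, if img k = img l then (X ^ r) i k * (X ^ s) l j else 0 := by
    intro k
    rw [Finset.sum_comm]
    refine Finset.sum_congr rfl fun l _ => ?_
    by_cases h : img k = img l
    · rw [Finset.sum_eq_single (img k)] <;> simp_all
      intro t ht; simp [Ne.symm ht]
    · rw [if_neg h]
      refine Finset.sum_eq_zero fun t _ => ?_
      rw [if_neg]
      rintro ⟨h1, h2⟩; exact h (h1.trans h2.symm)
  rw [Finset.sum_congr rfl fun k _ => key k]
  rw [pow_add, Matrix.mul_apply, Matrix.mul_apply]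
  have h2 : ∀ k, (X ^ r * D) i k = ∑ l, (X ^ r) i l * D l k :=
    fun k => Matrix.mul_apply
  simp only [h2, Finset.sum_mul]
  rw [← Finset.sum_add_distrib, Finset.sum_comm]
  refine Finset.sum_congr rfl fun k _ => ?_
  have split : ∀ x : Fin N,
      (if img x = img k then (X ^ r) i x * (X ^ s) k j else 0)
      = (if x = k then (X ^ r) i x * (X ^ s) k j else 0)
        + (if img x = img k ∧ x ≠ k then (X ^ r) i x * (X ^ s) k j else 0) := by
    intro x
    by_cases hx : x = k <;> by_cases h' : img x = img k <;> simp [hx, h']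
  rw [Finset.sum_congr rfl fun x _ => split x, Finset.sum_add_distrib,
    Finset.sum_ite_eq' Finset.univ k fun x => (X ^ r) i x * (X ^ s) k j]
  simp only [Finset.mem_univ, if_true, hD, ite_mul, mul_ite, one_mul, zero_mul,
    mul_one, mul_zero]
end
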